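/- Let σ be a finite Borel measure on ℝ, γ ∈ ℝ, H(z) = z + γ + ∫ (1 + t z)/(z - t) dσ(t) on the upper half-plane, and let x ∈ ℝ, u > 0 satisfy ∫ (1 + t²)/((t - x)² + u²) dσ(t) = 1. Then H'(x + iu) ≠ 0. -/

import Mathlib

open MeasureTheory Complex Metric
set_option maxHeartbeats 1000000

theorem stmt4 (σ : Measure ℝ) [IsFiniteMeasure σ] (γ : ℝ) (x u : ℝ) (hu : 0 < u)
    (hint : (∫ t : ℝ, (1 + t ^ 2) / ((t - x) ^ 2 + u ^ 2) ∂σ) = 1) :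
    deriv (fun z : ℂ => z + (γ : ℂ) + ∫ t : ℝ, (1 + (t : ℂ) * z) / (z - (t : ℂ)) ∂σ)
      ((x : ℂ) + (u : ℂ) * Complex.I) ≠ 0 := by
  set z₀ : ℂ := (x : ℂ) + (u : ℂ) * Complex.I with hz₀
  have hz₀re : z₀.re = x := by simp [hz₀]
  have hz₀im : z₀.im = u := by simp [hz₀]
  have hu2 : (0:ℝ) < u/2 := by positivity
  -- in the ball, im stays ≥ u/2 and re stays within u/2 of x
  have hball : ∀ z ∈ ball z₀ (u/2), u/2 ≤ z.im ∧ |z.re - x| ≤ u/2 := by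
    intro z hz
    have hd : ‖z - z₀‖ < u/2 := by
      rw [← Complex.dist_eq]; exact mem_ball.mp hz
    have h1 : |z.im - u| ≤ ‖z - z₀‖ := by
      simpa [hz₀im] using Complex.abs_im_le_norm (z - z₀)
    have h2 : |z.re - x| ≤ ‖z - z₀‖ := by
      simpa [hz₀re] using Complex.abs_re_le_norm (z - z₀)
    constructor
    · have := abs_le.mp (le_of_lt (lt_of_le_of_lt h1 hd))
      linarith [this.1]
    · linarith [le_of_lt (lt_of_le_of_lt h2 hd)]
  have hne : ∀ z ∈ ball z₀ (u/2), ∀ t : ℝ, z - (t:ℂ) ≠ 0 := by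
    intro z hz t h
    have him : (z - (t:ℂ)).im = z.im := by simp
    have := (hball z hz).1
    rw [h] at him
    simp at him
    linarith
  have hz₀ball : z₀ ∈ ball z₀ (u/2) := mem_ball_self hu2
  have hz₀ne : ∀ t : ℝ, z₀ - (t:ℂ) ≠ 0 := hne z₀ hz₀ball
  -- the derivative pointwise
  set F' : ℂ → ℝ → ℂ := fun z t => -(1+(t:ℂ)^2)/(z-(t:ℂ))^2 with hF'
  have hderiv : ∀ (t:ℝ), ∀ z ∈ ball z₀ (u/2),
      HasDerivAt (fun z : ℂ => (1+(t:ℂ)*z)/(z - (t:ℂ))) (F' z t) z := by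
    intro t z hz
    have h1 : HasDerivAt (fun z : ℂ => 1+(t:ℂ)*z) (t:ℂ) z := by
      simpa using ((hasDerivAt_id z).const_mul (t:ℂ)).const_add 1
    have h2 : HasDerivAt (fun z : ℂ => z - (t:ℂ)) 1 z := (hasDerivAt_id z).sub_const _
    have h : HasDerivAt (fun z : ℂ => (1+(t:ℂ)*z)/(z - (t:ℂ))) _ z := h1.div h2 (hne z hz t)
    convert h using 1
    show -(1+(t:ℂ)^2)/(z-(t:ℂ))^2 = _
    ring
  -- the uniform bound
  set C : ℝ := 6*(1+2*x^2+2*u^2)/u^2 with hC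
  have hbound : ∀ (t:ℝ), ∀ z ∈ ball z₀ (u/2), ‖F' z t‖ ≤ C := by
    intro t z hz
    obtain ⟨hb, ha⟩ := hball z hz
    have ha2 : (z.re - x)^2 ≤ u^2/4 := by
      have := sq_le_sq' (neg_le_of_abs_le ha) (le_of_abs_le ha)
      nlinarith
    have hb2 : u^2/4 ≤ z.im^2 := by nlinarith
    have hsq : ‖z - (t:ℂ)‖ ^ 2 = (z.re - t)^2 + z.im^2 := by
      rw [Complex.sq_norm, Complex.normSq_apply]
      simp
      ring
    have hspos : (0:ℝ) < (z.re - t)^2 + z.im^2 := by nlinarith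
    have habs1 : ‖(1:ℂ)+(t:ℂ)^2‖ = 1+t^2 := by
      rw [show (1:ℂ)+(t:ℂ)^2 = ((1+t^2 : ℝ):ℂ) by push_cast; ring]
      rw [Complex.norm_real, Real.norm_eq_abs]
      exact abs_of_nonneg (by positivity)
    have hnorm : ‖F' z t‖ = (1+t^2) / ((z.re - t)^2 + z.im^2) := by
      rw [hF']
      simp only [norm_div, norm_neg, norm_pow]
      rw [hsq, habs1]
    rw [hnorm, div_le_iff₀ hspos]
    have key : u^2 * (1+t^2) ≤ u^2 * (C * ((z.re - t)^2 + z.im^2)) := by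
      have hCu : u^2 * C = 6*(1+2*x^2+2*u^2) := by
        rw [hC]; field_simp
      have s1 : (t-x)^2 + u^2 ≤ 6*((t-z.re)^2 + z.im^2) := by
        nlinarith [sq_nonneg (t - 2*z.re + x)]
      have s2 : u^2*(1+t^2) ≤ (1+2*x^2+2*u^2)*((t-x)^2+u^2) := by
        nlinarith [sq_nonneg (u*(t-2*x)), sq_nonneg (x*(t-x)), sq_nonneg (t-x), sq_nonneg (u^2)]
      calc u^2*(1+t^2) ≤ (1+2*x^2+2*u^2)*((t-x)^2+u^2) := s2
        _ ≤ (1+2*x^2+2*u^2)*(6*((t-z.re)^2 + z.im^2)) := by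
            apply mul_le_mul_of_nonneg_left s1 (by positivity)
        _ = u^2 * (C * ((z.re - t)^2 + z.im^2)) := by
            rw [show u^2 * (C * ((z.re - t)^2 + z.im^2)) = (u^2*C) * ((z.re - t)^2 + z.im^2) by ring, hCu]
            ring
    have := le_of_mul_le_mul_left key (by positivity : (0:ℝ) < u^2)
    linarith
  -- integrability of F z₀
  have hF_int : Integrable (fun t : ℝ => (1+(t:ℂ)*z₀)/(z₀ - (t:ℂ))) σ := by
    apply Integrable.mono' (integrable_const (‖z₀‖ + ‖1+z₀^2‖/u))
    · exact (Continuous.div (by fun_prop) (by fun_prop) (fun t => hz₀ne t)).aestronglyMeasurable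
    · filter_upwards with t
      have habs : u ≤ ‖z₀ - (t:ℂ)‖ := by
        have h := Complex.abs_im_le_norm (z₀ - (t:ℂ))
        have : (z₀ - (t:ℂ)).im = u := by simp [hz₀im]
        rw [this] at h
        calc u ≤ |u| := le_abs_self u
          _ ≤ _ := h
      have hrw : (1+(t:ℂ)*z₀)/(z₀ - (t:ℂ)) = -z₀ + (1+z₀^2)/(z₀-(t:ℂ)) := by
        field_simp [hz₀ne t]
        ring
      rw [hrw]
      calc ‖-z₀ + (1+z₀^2)/(z₀-(t:ℂ))‖ ≤ ‖-z₀‖ + ‖(1+z₀^2)/(z₀-(t:ℂ))‖ := norm_add_le _ _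
        _ ≤ ‖z₀‖ + ‖1+z₀^2‖/u := by
            rw [norm_neg, norm_div]
            gcongr
  -- measurability
  have hF_meas : ∀ᶠ z in nhds z₀, AEStronglyMeasurable (fun t : ℝ => (1+(t:ℂ)*z)/(z - (t:ℂ))) σ := by
    filter_upwards [ball_mem_nhds z₀ hu2] with z hz
    exact (Continuous.div (by fun_prop) (by fun_prop) (fun t => hne z hz t)).aestronglyMeasurable
  have hF'_meas : AEStronglyMeasurable (F' z₀) σ := by
    apply Continuous.aestronglyMeasurable
    apply Continuous.div (by fun_prop) (by fun_prop)
    intro t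
    exact pow_ne_zero 2 (hz₀ne t)
  -- derivative of the integral
  obtain ⟨hF'_int, hDI⟩ := hasDerivAt_integral_of_dominated_loc_of_deriv_le (ball_mem_nhds z₀ hu2) hF_meas hF_int
    hF'_meas (Filter.Eventually.of_forall fun t z hz => hbound t z hz) (integrable_const C)
    (Filter.Eventually.of_forall fun t z hz => hderiv t z hz)
  -- derivative of the full map
  have hD : HasDerivAt (fun z : ℂ => z + (γ : ℂ) + ∫ t : ℝ, (1 + (t : ℂ) * z) / (z - (t : ℂ)) ∂σ)
      (1 + ∫ t : ℝ, F' z₀ t ∂σ) z₀ := ((hasDerivAt_id z₀).add_const (γ:ℂ)).add hDI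
  rw [hD.deriv]
  -- compute the real part of the integrand
  set f : ℝ → ℂ := fun t => (1+(t:ℂ)^2)/(z₀-(t:ℂ))^2 with hf
  have hF'f : ∀ t : ℝ, F' z₀ t = -(f t) := by
    intro t
    rw [hF', hf]
    ring
  have hf_int : Integrable f σ := by
    exact hF'_int.neg.congr (Filter.Eventually.of_forall fun t => by
      simp only [Pi.neg_apply, hF'f t, neg_neg])
  have hre : ∀ t : ℝ, (f t).re = (1+t^2)*((t-x)^2-u^2)/(((t-x)^2+u^2)^2) := by
    intro t
    have key : ∀ r p q : ℝ, (((r:ℝ):ℂ)/((p:ℂ)+(q:ℂ)*Complex.I)).re = r*p/(p*p+q*q) := by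
      intro r p q
      rw [Complex.div_re]
      simp [Complex.normSq_apply]
    have hb : (z₀-(t:ℂ))^2
        = (((x-t)^2-u^2 : ℝ) : ℂ) + ((2*(x-t)*u : ℝ) : ℂ) * Complex.I := by
      rw [hz₀]
      push_cast
      ring_nf
      rw [Complex.I_sq]
      ring
    have h1 : ((1:ℂ)+(t:ℂ)^2) = ((1+t^2 : ℝ) : ℂ) := by push_cast; ring
    rw [hf]
    simp only
    rw [hb, h1, key]
    rw [show ((x-t)^2-u^2)*((x-t)^2-u^2) + (2*(x-t)*u)*(2*(x-t)*u) = ((t-x)^2+u^2)^2 by ring,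
      show ((x-t)^2-u^2) = ((t-x)^2-u^2) by ring]
  -- the strict pointwise bound
  have hptlt : ∀ t : ℝ, (f t).re < (1 + t ^ 2) / ((t - x) ^ 2 + u ^ 2) := by
    intro t
    rw [hre]
    have hpos : (0:ℝ) < (t-x)^2 + u^2 := by positivity
    have hpos2 : (0:ℝ) < ((t-x)^2 + u^2)^2 := by positivity
    rw [div_lt_div_iff₀ hpos2 hpos]
    nlinarith [mul_pos (mul_pos (show (0:ℝ) < 1+t^2 by positivity) hpos)
      (show (0:ℝ) < u^2 by positivity)]
  -- g is integrable
  have hg_int : Integrable (fun t : ℝ => (1 + t ^ 2) / ((t - x) ^ 2 + u ^ 2)) σ := by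
    apply Integrable.mono' (integrable_const ((1+2*x^2+2*u^2)/u^2))
    · exact (Continuous.div (by fun_prop) (by fun_prop)
        (fun t => by positivity)).aestronglyMeasurable
    · filter_upwards with t
      have hpos : (0:ℝ) < (t-x)^2 + u^2 := by positivity
      show ‖(1 + t ^ 2) / ((t - x) ^ 2 + u ^ 2)‖ ≤ _
      have hnn : (0:ℝ) ≤ (1 + t ^ 2) / ((t - x) ^ 2 + u ^ 2) := by positivity
      have hup : (0:ℝ) < u^2 := by positivity
      rw [Real.norm_eq_abs, _root_.abs_of_nonneg hnn, div_le_div_iff₀ hpos hup]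
      nlinarith [sq_nonneg (u*(t-2*x)), sq_nonneg (x*(t-x)), sq_nonneg (t-x), sq_nonneg (u^2)]
  -- σ is nonzero
  have hσ : σ ≠ 0 := by
    intro h
    rw [h] at hint
    simp at hint
  have hfre : Integrable (fun t : ℝ => (f t).re) σ := by
    simpa only [RCLike.re_to_complex] using hf_int.re
  -- the strict integral inequality
  have hlt : ∫ t, (f t).re ∂σ < 1 := by
    have hsub : Integrable (fun t => (1 + t ^ 2) / ((t - x) ^ 2 + u ^ 2) - (f t).re) σ :=
      hg_int.sub hfre
    have hpos : 0 < ∫ t, ((1 + t ^ 2) / ((t - x) ^ 2 + u ^ 2) - (f t).re) ∂σ := by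
      rw [integral_pos_iff_support_of_nonneg (fun t => by
        have := hptlt t; simp only [Pi.zero_apply]; linarith) hsub]
      have hsupp : (Function.support fun t => (1 + t ^ 2) / ((t - x) ^ 2 + u ^ 2) - (f t).re)
          = Set.univ := by
        ext t
        simp only [Function.mem_support, Set.mem_univ, iff_true]
        have := hptlt t
        intro h
        linarith
      rw [hsupp]
      exact Measure.measure_univ_pos.mpr hσ
    rw [integral_sub hg_int hfre, hint] at hpos
    linarith
  -- conclude
  have hre_int : (∫ t : ℝ, F' z₀ t ∂σ).re = - ∫ t, (f t).re ∂σ := by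
    have h := integral_re hF'_int
    simp only [RCLike.re_to_complex] at h
    rw [← h, ← integral_neg]
    congr 1
    funext t
    rw [hF'f t]
    simp
  intro h
  have := congrArg Complex.re h
  simp only [Complex.add_re, Complex.one_re, Complex.zero_re] at this
  rw [hre_int] at this
  linarith
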